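/- Let U ∈ {0,1}^{n×k} be a clustering matrix in which every column is nonzero, and let D ∈ ℝ^{n×n} be a diagonal matrix. Then (U^T U)^{-1} U^T D U = Diag((U^T U)^{-1} U^T diag(D)), i.e., the k×k matrix (U^T U)^{-1} U^T D U is the diagonal matrix whose diagonal is the vector (U^T U)^{-1} U^T diag(D). -/
import Mathlib


open Matrix

/-- If `U ∈ {0,1}^{n×k}` is a clustering matrix (every row has exactly
one entry equal to 1) with every column nonzero, and `D ∈ ℝ^{n×n}` is diagonal, then
`(Uᵀ U)⁻¹ Uᵀ D U = Diag((Uᵀ U)⁻¹ Uᵀ diag(D))`. -/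
theorem clustering_conj_diagonal
    (n k : ℕ) (U : Matrix (Fin n) (Fin k) ℝ)
    (hbin : ∀ i j, U i j = 0 ∨ U i j = 1)
    (hrow : ∀ i, ∃! j, U i j = 1)
    (hcol : ∀ j, ∃ i, U i j = 1)
    (D : Matrix (Fin n) (Fin n) ℝ) (hD : D.IsDiag) :
    (Uᵀ * U)⁻¹ * Uᵀ * D * U
      = Matrix.diagonal (((Uᵀ * U)⁻¹ * Uᵀ) *ᵥ Matrix.diag D) := by
  -- key orthogonality fact
  have horth : ∀ (i : Fin n) (a b : Fin k), a ≠ b → U i a * U i b = 0 := by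
    intro i a b hab
    obtain ⟨j, hj, huniq⟩ := hrow i
    rcases hbin i a with ha | ha
    · rw [ha, zero_mul]
    rcases hbin i b with hb | hb
    · rw [hb, mul_zero]
    exact absurd ((huniq a ha).trans (huniq b hb).symm) hab
  set s : Fin k → ℝ := fun a => ∑ i, U i a with hs_def
  set t : Fin k → ℝ := fun a => ∑ i, U i a * D i i with ht_def
  have hsq : ∀ i a, U i a * U i a = U i a := by
    intro i a; rcases hbin i a with h | h <;> rw [h] <;> ring
  have h1 : Uᵀ * U = Matrix.diagonal s := by
    ext a b
    simp only [Matrix.mul_apply, Matrix.transpose_apply, Matrix.diagonal_apply]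
    by_cases hab : a = b
    · subst hab
      simp only [if_pos rfl, hs_def]
      exact Finset.sum_congr rfl fun i _ => hsq i a
    · rw [if_neg hab]
      exact Finset.sum_eq_zero fun i _ => horth i a b hab
  have hDrow : ∀ (i : Fin n) (b : Fin k), ∑ j, D i j * U j b = D i i * U i b := by
    intro i b
    rw [Finset.sum_eq_single i]
    · intro j _ hji; rw [hD (Ne.symm hji), zero_mul]
    · intro h; exact absurd (Finset.mem_univ i) h
  have h2 : Uᵀ * (D * U) = Matrix.diagonal t := by
    ext a b
    simp only [Matrix.mul_apply, Matrix.transpose_apply, Matrix.diagonal_apply]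
    by_cases hab : a = b
    · subst hab
      rw [if_pos rfl, ht_def]
      refine Finset.sum_congr rfl fun i _ => ?_
      rw [hDrow i a, ← mul_assoc, mul_comm (U i a) (D i i), mul_assoc, hsq]
    · rw [if_neg hab]
      refine Finset.sum_eq_zero fun i _ => ?_
      rw [hDrow i b, ← mul_assoc, mul_comm (U i a) (D i i), mul_assoc,
        horth i a b hab, mul_zero]
  have hs_ne : ∀ a, s a ≠ 0 := by
    intro a
    obtain ⟨i, hi⟩ := hcol a
    have : (1 : ℝ) ≤ s a := by
      rw [← hi]
      exact Finset.single_le_sum (f := fun i => U i a)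
        (fun j _ => by rcases hbin j a with h | h <;> simp [h])
        (Finset.mem_univ i)
    linarith
  have hinv : (Uᵀ * U)⁻¹ = Matrix.diagonal (fun a => (s a)⁻¹) := by
    apply Matrix.inv_eq_right_inv
    rw [h1, Matrix.diagonal_mul_diagonal]
    have hfun : (fun i => s i * (s i)⁻¹) = fun _ => (1 : ℝ) :=
      funext fun a => mul_inv_cancel₀ (hs_ne a)
    rw [hfun, Matrix.diagonal_one]
  have hvec : ((Uᵀ * U)⁻¹ * Uᵀ) *ᵥ Matrix.diag D
      = fun a => (s a)⁻¹ * t a := by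
    funext a
    rw [hinv]
    simp only [Matrix.mulVec, dotProduct, Matrix.diagonal_mul,
      Matrix.transpose_apply, Matrix.diag]
    rw [ht_def, Finset.mul_sum]
    exact Finset.sum_congr rfl fun i _ => by ring
  calc (Uᵀ * U)⁻¹ * Uᵀ * D * U
      = (Uᵀ * U)⁻¹ * (Uᵀ * (D * U)) := by
        rw [Matrix.mul_assoc, Matrix.mul_assoc]
    _ = Matrix.diagonal (fun a => (s a)⁻¹) * Matrix.diagonal t := by
        rw [hinv, h2]
    _ = Matrix.diagonal (((Uᵀ * U)⁻¹ * Uᵀ) *ᵥ Matrix.diag D) := by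
        rw [Matrix.diagonal_mul_diagonal, hvec]
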